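/- Let $r \ge 2$, $t$, and $k$ be positive integers and let $H = (V, E)$ be a finite $r$-uniform hypergraph with maximum degree $\Delta$. If $\frac{t!}{t+1}\left(\frac{k}{\Delta}\right)^t \ge \mathrm{e}\, r$, then the edge set $E$ can be partitioned into $k$ pairwise disjoint $t$-shallow edge sets $M_1, \dots, M_k$ (i.e., there is a coloring $\chi : E \to \{1,\dots,k\}$ such that no vertex is contained in more than $t$ edges of any single color). -/

import Mathlib

open Finset

section LLLCounting

variable {ι : Type*} [Fintype ι] [DecidableEq ι]

/-- `f` is monochromatic on `T`. -/
def MonoOn {k : ℕ} (f : ι → Fin k) (T : Finset ι) : Prop :=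
  ∀ i ∈ T, ∀ j ∈ T, f i = f j

instance {k : ℕ} (f : ι → Fin k) (T : Finset ι) : Decidable (MonoOn f T) := by
  unfold MonoOn; infer_instance

/-- Number of colorings avoiding all monochromatic events in `S`. -/
def NA (k : ℕ) (S : Finset (Finset ι)) : ℕ :=
  (univ.filter fun f : ι → Fin k => ∀ T ∈ S, ¬ MonoOn f T).card

lemma inj_bound (k t : ℕ) (T0 : Finset ι) (hT0 : T0.card = t + 1)
    (S2 : Finset (Finset ι)) (hS2 : ∀ T ∈ S2, Disjoint T T0) :
    k ^ t * (univ.filter fun f : ι → Fin k =>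
      MonoOn f T0 ∧ ∀ T ∈ S2, ¬ MonoOn f T).card ≤ NA k S2 := by
  obtain ⟨i0, hi0⟩ : T0.Nonempty := card_pos.1 (by omega)
  set E : Finset ι := T0.erase i0 with hE
  have hEcard : E.card = t := by rw [hE, card_erase_of_mem hi0, hT0]; omega
  have hEsub : E ⊆ T0 := erase_subset _ _
  set A := (univ.filter fun f : ι → Fin k =>
      MonoOn f T0 ∧ ∀ T ∈ S2, ¬ MonoOn f T) with hA
  set Φ : ((ι → Fin k) × (↥E → Fin k)) → (ι → Fin k) :=
    fun p j => if h : j ∈ E then p.2 ⟨j, h⟩ else p.1 j with hΦ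
  have hagree : ∀ p : ((ι → Fin k) × (↥E → Fin k)), ∀ j ∉ E, Φ p j = p.1 j := by
    intro p j hj; simp [hΦ, hj]
  have key : (A ×ˢ (univ : Finset (↥E → Fin k))).card ≤ NA k S2 := by
    apply Finset.card_le_card_of_injOn Φ
    · rintro ⟨f, g⟩ hp
      simp only [mem_coe, mem_product, hA, mem_filter, mem_univ, true_and] at hp
      obtain ⟨⟨hmono, havoid⟩, -⟩ := hp
      simp only [NA, mem_coe, mem_filter, mem_univ, true_and]
      intro T hT hmonoT
      apply havoid T hT
      intro i hi j hj
      have hdisj := hS2 T hT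
      have hiE : i ∉ E := fun h => (disjoint_left.1 hdisj hi) (hEsub h)
      have hjE : j ∉ E := fun h => (disjoint_left.1 hdisj hj) (hEsub h)
      have := hmonoT i hi j hj
      rwa [hagree ⟨f, g⟩ i hiE, hagree ⟨f, g⟩ j hjE] at this
    · rintro ⟨f, g⟩ hp ⟨f', g'⟩ hp' heq
      simp only [mem_coe, mem_product, hA, mem_filter, mem_univ, true_and] at hp hp'
      obtain ⟨⟨hmono, -⟩, -⟩ := hp
      obtain ⟨⟨hmono', -⟩, -⟩ := hp'
      have heqfun : ∀ j, Φ ⟨f, g⟩ j = Φ ⟨f', g'⟩ j := fun j => congrFun heq j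
      have hi0E : i0 ∉ E := notMem_erase _ _
      have hfi0 : f i0 = f' i0 := by
        have := heqfun i0; rwa [hagree _ _ hi0E, hagree _ _ hi0E] at this
      have hf : f = f' := by
        funext j
        by_cases hj : j ∈ E
        · have hjT0 : j ∈ T0 := hEsub hj
          calc f j = f i0 := hmono j hjT0 i0 hi0
            _ = f' i0 := hfi0
            _ = f' j := (hmono' j hjT0 i0 hi0).symm
        · have := heqfun j; rwa [hagree _ _ hj, hagree _ _ hj] at this
      have hg : g = g' := by
        funext ⟨j, hj⟩
        have := heqfun j
        simpa [hΦ, hj] using this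
      rw [hf, hg]
  calc k ^ t * A.card = A.card * k ^ t := mul_comm _ _
    _ = (A ×ˢ (univ : Finset (↥E → Fin k))).card := by
        rw [card_product, Finset.card_univ, Fintype.card_fun, Fintype.card_coe, hEcard,
          Fintype.card_fin]
    _ ≤ NA k S2 := key

lemma chain_bound (k D n : ℕ) (𝒜 : Finset (Finset ι))
    (H : ∀ S' : Finset (Finset ι), S'.card < n → S' ⊆ 𝒜 → ∀ T0 ∈ 𝒜,
      (D - 1) * NA k S' ≤ D * NA k (insert T0 S')) :
    ∀ m (S2 S : Finset (Finset ι)), S2 ⊆ S → S ⊆ 𝒜 → S.card ≤ n → (S \ S2).card = m →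
      (D - 1) ^ m * NA k S2 ≤ D ^ m * NA k S := by
  intro m
  induction m with
  | zero =>
    intro S2 S hsub h𝒜 hn hcard
    have : S2 = S := Finset.Subset.antisymm hsub
      ((sdiff_eq_empty_iff_subset).1 (card_eq_zero.1 hcard))
    simp [this]
  | succ m IH =>
    intro S2 S hsub h𝒜 hn hcard
    obtain ⟨j, hj⟩ : (S \ S2).Nonempty := card_pos.1 (by omega)
    have hjS : j ∈ S := (mem_sdiff.1 hj).1
    have hjS2 : j ∉ S2 := (mem_sdiff.1 hj).2
    have hS2' : insert j S2 ⊆ S := insert_subset hjS hsub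
    have hcard' : (S \ insert j S2).card = m := by
      rw [Finset.sdiff_insert, card_erase_of_mem hj, hcard]; omega
    have hS2card : S2.card < n := by
      have h1 : (S \ S2).card + S2.card = S.card := card_sdiff_add_card_eq_card hsub
      omega
    have h1 : (D - 1) * NA k S2 ≤ D * NA k (insert j S2) :=
      H S2 hS2card (hsub.trans h𝒜) j (h𝒜 hjS)
    have h2 : (D - 1) ^ m * NA k (insert j S2) ≤ D ^ m * NA k S :=
      IH (insert j S2) S hS2' h𝒜 hn hcard'
    calc (D - 1) ^ (m + 1) * NA k S2 = (D - 1) ^ m * ((D - 1) * NA k S2) := by ring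
      _ ≤ (D - 1) ^ m * (D * NA k (insert j S2)) := Nat.mul_le_mul_left _ h1
      _ = D * ((D - 1) ^ m * NA k (insert j S2)) := by ring
      _ ≤ D * (D ^ m * NA k S) := Nat.mul_le_mul_left _ h2
      _ = D ^ (m + 1) * NA k S := by ring

lemma main_claim (k t D : ℕ) (hD : 2 ≤ D) (𝒜 : Finset (Finset ι))
    (hcards : ∀ T ∈ 𝒜, T.card = t + 1)
    (hnb : ∀ T0 ∈ 𝒜, (𝒜.filter fun T => ¬ Disjoint T T0).card ≤ D)
    (hkey : ∀ s ≤ D - 1, D ^ (s + 1) ≤ (D - 1) ^ s * k ^ t) :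
    ∀ n (S : Finset (Finset ι)), S.card = n → S ⊆ 𝒜 → ∀ T0 ∈ 𝒜,
      (D - 1) * NA k S ≤ D * NA k (insert T0 S) := by
  intro n
  induction n using Nat.strong_induction_on with
  | _ n IHn =>
    intro S hcardS hS𝒜 T0 hT0
    by_cases hT0S : T0 ∈ S
    · rw [Finset.insert_eq_self.2 hT0S]
      exact Nat.mul_le_mul_right _ (Nat.sub_le D 1)
    set S1 := S.filter (fun T => ¬ Disjoint T T0) with hS1
    set S2 := S.filter (fun T => Disjoint T T0) with hS2
    have hS2S : S2 ⊆ S := filter_subset _ _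
    have hsdiff : S \ S2 = S1 := by
      rw [hS1, hS2, Finset.filter_not]
    set s := S1.card with hs
    -- s ≤ D - 1
    have hsle : s ≤ D - 1 := by
      have hsub : insert T0 S1 ⊆ 𝒜.filter (fun T => ¬ Disjoint T T0) := by
        intro T hT
        rcases mem_insert.1 hT with rfl | hT
        · refine mem_filter.2 ⟨hT0, ?_⟩
          rw [Finset.disjoint_self_iff_empty]
          intro h
          have := hcards T hT0
          rw [h] at this
          simp at this
        · rcases mem_filter.1 hT with ⟨hTS, hnd⟩
          exact mem_filter.2 ⟨hS𝒜 hTS, hnd⟩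
      have hT0S1 : T0 ∉ S1 := fun h => hT0S (mem_of_mem_filter _ h)
      have := (card_le_card hsub)
      rw [card_insert_of_notMem hT0S1] at this
      have := this.trans (hnb T0 hT0)
      omega
    set M := (univ.filter fun f : ι → Fin k =>
        MonoOn f T0 ∧ ∀ T ∈ S2, ¬ MonoOn f T).card with hM
    -- (a) NA k S ≤ NA k (insert T0 S) + M
    have ha : NA k S ≤ NA k (insert T0 S) + M := by
      have hsplit := Finset.card_filter_add_card_filter_not
        (s := univ.filter fun f : ι → Fin k => ∀ T ∈ S, ¬ MonoOn f T)
        (fun f : ι → Fin k => MonoOn f T0)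
      have h1 : ((univ.filter fun f : ι → Fin k => ∀ T ∈ S, ¬ MonoOn f T).filter
          fun f => ¬ MonoOn f T0) = (univ.filter fun f : ι → Fin k =>
            ∀ T ∈ insert T0 S, ¬ MonoOn f T) := by
        ext f
        simp only [mem_filter, mem_univ, true_and, mem_insert]
        constructor
        · rintro ⟨h, h0⟩ T hT
          rcases hT with rfl | hT
          exacts [h0, h T hT]
        · intro h
          exact ⟨fun T hT => h T (Or.inr hT), h T0 (Or.inl rfl)⟩
      have h2 : ((univ.filter fun f : ι → Fin k => ∀ T ∈ S, ¬ MonoOn f T).filter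
          fun f => MonoOn f T0).card ≤ M := by
        apply card_le_card
        intro f hf
        simp only [mem_filter, mem_univ, true_and] at hf ⊢
        exact ⟨hf.2, fun T hT => hf.1 T (hS2S hT)⟩
      have heq : NA k S = ((univ.filter fun f : ι → Fin k => ∀ T ∈ S, ¬ MonoOn f T).filter
          fun f => MonoOn f T0).card + NA k (insert T0 S) := by
        simp only [NA]
        rw [← h1, hsplit]
      omega
    -- (b)
    have hb : k ^ t * M ≤ NA k S2 := by
      apply inj_bound k t T0 (hcards T0 hT0)
      intro T hT
      exact (mem_filter.1 hT).2
    -- (c)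
    have hc : (D - 1) ^ s * NA k S2 ≤ D ^ s * NA k S := by
      apply chain_bound k D n 𝒜
      · intro S' hlt hsub' T1 hT1
        exact IHn S'.card hlt S' rfl hsub' T1 hT1
      · exact hS2S
      · exact hS𝒜
      · omega
      · rw [hsdiff]
    have hkeys : D ^ (s + 1) ≤ (D - 1) ^ s * k ^ t := hkey s hsle
    -- combine: D * M ≤ NA k S
    have hDM : D * M ≤ NA k S := by
      have hDpos : 0 < D ^ s := Nat.pow_pos (by omega)
      apply Nat.le_of_mul_le_mul_left _ hDpos
      calc D ^ s * (D * M) = D ^ (s + 1) * M := by ring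
        _ ≤ ((D - 1) ^ s * k ^ t) * M := Nat.mul_le_mul_right _ hkeys
        _ = (D - 1) ^ s * (k ^ t * M) := by ring
        _ ≤ (D - 1) ^ s * NA k S2 := Nat.mul_le_mul_left _ hb
        _ ≤ D ^ s * NA k S := hc
    have hfinal : (D - 1) * NA k S + NA k S ≤ D * NA k (insert T0 S) + NA k S := by
      have hDeq : D = (D - 1) + 1 := by omega
      calc (D - 1) * NA k S + NA k S = ((D - 1) + 1) * NA k S := by ring
        _ = D * NA k S := by rw [← hDeq]
        _ ≤ D * (NA k (insert T0 S) + M) := Nat.mul_le_mul_left _ ha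
        _ = D * NA k (insert T0 S) + D * M := by ring
        _ ≤ D * NA k (insert T0 S) + NA k S := Nat.add_le_add_left hDM _
    exact Nat.le_of_add_le_add_right hfinal

lemma NA_pos (k t D : ℕ) (hk : 1 ≤ k) (hD : 2 ≤ D) (𝒜 : Finset (Finset ι))
    (hcards : ∀ T ∈ 𝒜, T.card = t + 1)
    (hnb : ∀ T0 ∈ 𝒜, (𝒜.filter fun T => ¬ Disjoint T T0).card ≤ D)
    (hkey : ∀ s ≤ D - 1, D ^ (s + 1) ≤ (D - 1) ^ s * k ^ t) :
    0 < NA k 𝒜 := by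
  have hchain := chain_bound k D 𝒜.card 𝒜
    (fun S' hlt hsub T0 hT0 =>
      main_claim k t D hD 𝒜 hcards hnb hkey S'.card S' rfl hsub T0 hT0)
    𝒜.card ∅ 𝒜 (empty_subset _) (Finset.Subset.refl _) le_rfl (by simp)
  have hNAempty : 0 < NA k (∅ : Finset (Finset ι)) := by
    haveI : Nonempty (Fin k) := ⟨⟨0, hk⟩⟩
    rw [NA]
    simp only [notMem_empty, false_implies, implies_true, filter_true_of_mem, forall_const]
    exact Fintype.card_pos
  have hD1 : 0 < (D - 1) ^ 𝒜.card := Nat.pow_pos (by omega)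
  rcases Nat.eq_zero_or_pos (NA k 𝒜) with h0 | h
  · exfalso
    rw [h0, Nat.mul_zero] at hchain
    have hlt : 0 < (D - 1) ^ 𝒜.card * NA k (∅ : Finset (Finset ι)) :=
      Nat.mul_pos hD1 hNAempty
    omega
  · exact h

lemma key_ineq (D k t : ℕ) (hD : 2 ≤ D) (hek : Real.exp 1 * D ≤ (k : ℝ) ^ t) :
    ∀ s ≤ D - 1, D ^ (s + 1) ≤ (D - 1) ^ s * k ^ t := by
  intro s hsle
  have hd1 : (1 : ℝ) ≤ (D : ℝ) - 1 := by
    have : (2 : ℝ) ≤ (D : ℝ) := by exact_mod_cast hD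
    linarith
  have hd1pos : (0 : ℝ) < (D : ℝ) - 1 := by linarith
  set x : ℝ := 1 / ((D : ℝ) - 1) with hx
  have hxpos : 0 < x := by positivity
  have hbase1 : (1 : ℝ) ≤ (D : ℝ) / ((D : ℝ) - 1) := by
    rw [le_div_iff₀ hd1pos]; linarith
  have hratio : ((D : ℝ) / ((D : ℝ) - 1)) ^ s ≤ ((D : ℝ) / ((D : ℝ) - 1)) ^ (D - 1) := by
    apply pow_le_pow_right₀ hbase1
    omega
  have hcastD1 : ((D - 1 : ℕ) : ℝ) = (D : ℝ) - 1 := by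
    have : (1 : ℕ) ≤ D := by omega
    push_cast [Nat.cast_sub this]; ring
  have hexp : ((D : ℝ) / ((D : ℝ) - 1)) ^ (D - 1) ≤ Real.exp 1 := by
    have h1 : (D : ℝ) / ((D : ℝ) - 1) = 1 + x := by
      rw [hx, one_add_div (ne_of_gt hd1pos), sub_add_cancel]
    have h2 : 1 + x ≤ Real.exp x := by
      have := Real.add_one_le_exp x
      linarith
    have h3 : ((D : ℝ) / ((D : ℝ) - 1)) ^ (D - 1) ≤ (Real.exp x) ^ (D - 1) := by
      rw [h1]
      apply pow_le_pow_left₀ (by linarith) h2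
    have h4 : (Real.exp x) ^ (D - 1) = Real.exp (((D - 1 : ℕ) : ℝ) * x) := by
      rw [← Real.exp_nat_mul]
    have h5 : ((D - 1 : ℕ) : ℝ) * x = 1 := by
      rw [hcastD1, hx]
      field_simp
    rw [h4, h5] at h3
    exact h3
  -- in ℝ: D^(s+1) ≤ (D-1)^s * k^t
  have hreal : (D : ℝ) ^ (s + 1) ≤ ((D : ℝ) - 1) ^ s * (k : ℝ) ^ t := by
    have hDs : (D : ℝ) ^ s ≤ Real.exp 1 * ((D : ℝ) - 1) ^ s := by
      have hpow : ((D : ℝ) / ((D : ℝ) - 1)) ^ s = (D : ℝ) ^ s / ((D : ℝ) - 1) ^ s := by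
        rw [div_pow]
      have h := hratio.trans hexp
      rw [hpow, div_le_iff₀ (by positivity)] at h
      linarith [h]
    have hDpos : (0 : ℝ) < (D : ℝ) := by linarith
    calc (D : ℝ) ^ (s + 1) = (D : ℝ) ^ s * (D : ℝ) := by ring
      _ ≤ (Real.exp 1 * ((D : ℝ) - 1) ^ s) * (D : ℝ) := by
          apply mul_le_mul_of_nonneg_right hDs (le_of_lt hDpos)
      _ = ((D : ℝ) - 1) ^ s * (Real.exp 1 * (D : ℝ)) := by ring
      _ ≤ ((D : ℝ) - 1) ^ s * (k : ℝ) ^ t := by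
          apply mul_le_mul_of_nonneg_left hek (by positivity)
  have : ((D ^ (s + 1) : ℕ) : ℝ) ≤ (((D - 1) ^ s * k ^ t : ℕ) : ℝ) := by
    push_cast [hcastD1]
    convert hreal using 2 <;> rw [hcastD1]
  exact_mod_cast this

end LLLCounting

/-- Lemma 3.1: if `H` is an `r`-uniform hypergraph (edges indexed by `ι`, parallel edges
allowed) with maximum degree at most `Δ`, and `t!/(t+1)·(k/Δ)^t ≥ e·r`, then the edges can
be `k`-colored so that every color class is `t`-shallow, i.e. no vertex lies in more than
`t` edges of a single color. -/
theorem edge_partition_into_shallow_sets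
    {V ι : Type*} [Fintype V] [Fintype ι] [DecidableEq V] [DecidableEq ι]
    (r t k Δ : ℕ) (hr : 2 ≤ r) (ht : 1 ≤ t) (hk : 1 ≤ k)
    (ed : ι → Finset V) (hunif : ∀ i, (ed i).card = r)
    (hΔ : ∀ v : V, (Finset.univ.filter fun i => v ∈ ed i).card ≤ Δ)
    (hcond : Real.exp 1 * r ≤ (Nat.factorial t : ℝ) / (t + 1) * ((k : ℝ) / Δ)^t) :
    ∃ χ : ι → Fin k, ∀ (v : V) (c : Fin k),
      (Finset.univ.filter fun i => v ∈ ed i ∧ χ i = c).card ≤ t := by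
  classical
  by_cases hΔt : Δ ≤ t
  · refine ⟨fun _ => ⟨0, hk⟩, fun v c => ?_⟩
    calc (Finset.univ.filter fun i => v ∈ ed i ∧ (fun _ => (⟨0, hk⟩ : Fin k)) i = c).card
        ≤ (Finset.univ.filter fun i => v ∈ ed i).card := by
          apply Finset.card_le_card
          intro i hi
          simp only [Finset.mem_filter] at hi ⊢
          exact ⟨hi.1, hi.2.1⟩
      _ ≤ Δ := hΔ v
      _ ≤ t := hΔt
  push_neg at hΔt
  -- Δ ≥ t + 1, in particular Δ ≥ 2
  have hΔpos : 0 < Δ := by omega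
  set 𝒜 : Finset (Finset ι) := Finset.univ.filter
    (fun T : Finset ι => T.card = t + 1 ∧ ∃ v, ∀ i ∈ T, v ∈ ed i) with h𝒜
  set D : ℕ := (t + 1) * (r * (Δ - 1).choose t) with hD
  have hchoosepos : 0 < (Δ - 1).choose t := Nat.choose_pos (by omega)
  have hD2 : 2 ≤ D := by
    calc 2 ≤ (t + 1) * 1 := by omega
      _ ≤ (t + 1) * (r * (Δ - 1).choose t) := by
          apply Nat.mul_le_mul_left
          calc 1 ≤ 2 * 1 := by omega
            _ ≤ r * (Δ - 1).choose t := Nat.mul_le_mul hr hchoosepos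
  have hcards : ∀ T ∈ 𝒜, T.card = t + 1 := by
    intro T hT
    exact ((Finset.mem_filter.1 hT).2).1
  -- neighborhood bound
  have hnb : ∀ T0 ∈ 𝒜, (𝒜.filter fun T => ¬ Disjoint T T0).card ≤ D := by
    intro T0 hT0
    have hT0card : T0.card = t + 1 := hcards T0 hT0
    have hsub : 𝒜.filter (fun T => ¬ Disjoint T T0) ⊆
        T0.biUnion fun i => (ed i).biUnion fun v =>
          (((Finset.univ.filter fun j => v ∈ ed j).erase i).powersetCard t).image
            (insert i) := by
      intro T hT
      rcases Finset.mem_filter.1 hT with ⟨hT𝒜, hndisj⟩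
      rcases Finset.mem_filter.1 hT𝒜 with ⟨-, hcard, v, hv⟩
      obtain ⟨i, hiT, hiT0⟩ := Finset.not_disjoint_iff.1 hndisj
      refine Finset.mem_biUnion.2 ⟨i, hiT0, Finset.mem_biUnion.2 ⟨v, hv i hiT,
        Finset.mem_image.2 ⟨T.erase i, ?_, Finset.insert_erase hiT⟩⟩⟩
      rw [Finset.mem_powersetCard]
      constructor
      · intro j hj
        rcases Finset.mem_erase.1 hj with ⟨hne, hjT⟩
        exact Finset.mem_erase.2 ⟨hne, Finset.mem_filter.2 ⟨Finset.mem_univ j, hv j hjT⟩⟩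
      · rw [Finset.card_erase_of_mem hiT, hcard]; omega
    calc (𝒜.filter fun T => ¬ Disjoint T T0).card
        ≤ (T0.biUnion fun i => (ed i).biUnion fun v =>
            (((Finset.univ.filter fun j => v ∈ ed j).erase i).powersetCard t).image
              (insert i)).card := Finset.card_le_card hsub
      _ ≤ ∑ i ∈ T0, ((ed i).biUnion fun v =>
            (((Finset.univ.filter fun j => v ∈ ed j).erase i).powersetCard t).image
              (insert i)).card := Finset.card_biUnion_le
      _ ≤ ∑ i ∈ T0, (r * (Δ - 1).choose t) := by
          apply Finset.sum_le_sum
          intro i hi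
          calc ((ed i).biUnion fun v =>
                (((Finset.univ.filter fun j => v ∈ ed j).erase i).powersetCard t).image
                  (insert i)).card
              ≤ ∑ v ∈ ed i,
                ((((Finset.univ.filter fun j => v ∈ ed j).erase i).powersetCard t).image
                  (insert i)).card := Finset.card_biUnion_le
            _ ≤ ∑ v ∈ ed i, (Δ - 1).choose t := by
                apply Finset.sum_le_sum
                intro v hv
                calc ((((Finset.univ.filter fun j => v ∈ ed j).erase i).powersetCard
                      t).image (insert i)).card
                    ≤ (((Finset.univ.filter fun j => v ∈ ed j).erase i).powersetCard
                      t).card := Finset.card_image_le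
                  _ = (((Finset.univ.filter fun j => v ∈ ed j).erase i).card).choose t :=
                      Finset.card_powersetCard _ _
                  _ ≤ (Δ - 1).choose t := by
                      apply Nat.choose_le_choose
                      have hmem : i ∈ Finset.univ.filter fun j => v ∈ ed j :=
                        Finset.mem_filter.2 ⟨Finset.mem_univ i, hv⟩
                      rw [Finset.card_erase_of_mem hmem]
                      have := hΔ v
                      omega
            _ = r * (Δ - 1).choose t := by
                rw [Finset.sum_const, hunif i, smul_eq_mul]
      _ = (t + 1) * (r * (Δ - 1).choose t) := by
          rw [Finset.sum_const, hT0card, smul_eq_mul]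
  -- e * D ≤ k ^ t
  have hek : Real.exp 1 * D ≤ (k : ℝ) ^ t := by
    have ht! : (0 : ℝ) < (Nat.factorial t : ℝ) := by
      exact_mod_cast Nat.factorial_pos t
    have hΔR : (0 : ℝ) < (Δ : ℝ) := by exact_mod_cast hΔpos
    have ht1 : (0 : ℝ) < (t : ℝ) + 1 := by positivity
    -- from hcond : e * r * (t+1) * Δ^t ≤ t! * k^t
    have h1 : Real.exp 1 * r * ((t : ℝ) + 1) * (Δ : ℝ) ^ t
        ≤ (Nat.factorial t : ℝ) * (k : ℝ) ^ t := by
      have hkd : ((k : ℝ) / Δ) ^ t * (Δ : ℝ) ^ t = (k : ℝ) ^ t := by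
        rw [← mul_pow]
        congr 1
        field_simp
      have := mul_le_mul_of_nonneg_right hcond (le_of_lt (pow_pos hΔR t))
      calc Real.exp 1 * r * ((t : ℝ) + 1) * (Δ : ℝ) ^ t
          = (Real.exp 1 * r * (Δ : ℝ) ^ t) * ((t : ℝ) + 1) := by ring
        _ ≤ ((Nat.factorial t : ℝ) / (t + 1) * ((k : ℝ) / Δ) ^ t * (Δ : ℝ) ^ t)
            * ((t : ℝ) + 1) := by
            apply mul_le_mul_of_nonneg_right _ (le_of_lt ht1)
            calc Real.exp 1 * r * (Δ : ℝ) ^ t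
                ≤ ((Nat.factorial t : ℝ) / (t + 1) * ((k : ℝ) / Δ) ^ t) * (Δ : ℝ) ^ t :=
                  this
              _ = (Nat.factorial t : ℝ) / (t + 1) * ((k : ℝ) / Δ) ^ t * (Δ : ℝ) ^ t := by
                  ring
        _ = (Nat.factorial t : ℝ) / (t + 1) * (((k : ℝ) / Δ) ^ t * (Δ : ℝ) ^ t)
            * ((t : ℝ) + 1) := by ring
        _ = (Nat.factorial t : ℝ) * (k : ℝ) ^ t := by
            rw [hkd]; field_simp
    -- D * t! ≤ (t+1) * r * Δ^t  (as naturals)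
    have h2 : (D : ℝ) * (Nat.factorial t : ℝ) ≤ ((t : ℝ) + 1) * r * (Δ : ℝ) ^ t := by
      have hnat : D * Nat.factorial t ≤ (t + 1) * r * Δ ^ t := by
        have hdesc : (Δ - 1).choose t * Nat.factorial t ≤ Δ ^ t := by
          have h3 : (Δ - 1).choose t * Nat.factorial t = (Δ - 1).descFactorial t := by
            rw [Nat.descFactorial_eq_factorial_mul_choose, Nat.mul_comm]
          rw [h3]
          calc (Δ - 1).descFactorial t ≤ (Δ - 1) ^ t := Nat.descFactorial_le_pow _ _
            _ ≤ Δ ^ t := Nat.pow_le_pow_left (by omega) t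
        calc D * Nat.factorial t = (t + 1) * r * ((Δ - 1).choose t * Nat.factorial t) := by
              rw [hD]; ring
          _ ≤ (t + 1) * r * Δ ^ t := Nat.mul_le_mul_left _ hdesc
      exact_mod_cast hnat
    -- combine
    have hepos : (0 : ℝ) < Real.exp 1 := Real.exp_pos 1
    have hDpos : (0 : ℝ) < (D : ℝ) := by
      have : (0:ℕ) < D := by omega
      exact_mod_cast this
    rw [← mul_le_mul_iff_of_pos_right ht!]
    calc Real.exp 1 * (D : ℝ) * (Nat.factorial t : ℝ)
        = Real.exp 1 * ((D : ℝ) * (Nat.factorial t : ℝ)) := by ring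
      _ ≤ Real.exp 1 * (((t : ℝ) + 1) * r * (Δ : ℝ) ^ t) := by
          apply mul_le_mul_of_nonneg_left h2 (le_of_lt hepos)
      _ = Real.exp 1 * r * ((t : ℝ) + 1) * (Δ : ℝ) ^ t := by ring
      _ ≤ (Nat.factorial t : ℝ) * (k : ℝ) ^ t := h1
      _ = (k : ℝ) ^ t * (Nat.factorial t : ℝ) := by ring
  have hkey := key_ineq D k t hD2 hek
  have hpos := NA_pos k t D hk hD2 𝒜 hcards hnb hkey
  obtain ⟨f, hf⟩ : ∃ f : ι → Fin k, ∀ T ∈ 𝒜, ¬ MonoOn f T := by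
    rcases Finset.card_pos.1 hpos with ⟨f, hfmem⟩
    exact ⟨f, (Finset.mem_filter.1 hfmem).2⟩
  refine ⟨f, fun v c => ?_⟩
  by_contra hcon
  push_neg at hcon
  obtain ⟨T, hTsub, hTcard⟩ :=
    Finset.exists_subset_card_eq (show t + 1 ≤ _ from hcon)
  apply hf T
  · refine Finset.mem_filter.2 ⟨Finset.mem_univ _, hTcard, v, fun i hi => ?_⟩
    exact ((Finset.mem_filter.1 (hTsub hi)).2).1
  · intro i hi j hj
    have h1 : f i = c := ((Finset.mem_filter.1 (hTsub hi)).2).2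
    have h2 : f j = c := ((Finset.mem_filter.1 (hTsub hj)).2).2
    rw [h1, h2]
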